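/- Define ρ = (4/3)^(1/4), b(k) = ((k−1)! ρ)^(1/(k−1)) for k ≥ 2, λ(k) = log(b(k+1)/b(k)), α(2) = 2/ρ^3, α(3) = 6/(ρ^4 b(3) b(5)), α(k) = α(k−1)/(1 + k(λ(k−1) − λ(k))) for k ≥ 4. Then the sequence k·α(k) is strictly increasing for k ≥ 2. -/

import Mathlib

noncomputable def rho : ℝ := (4/3 : ℝ) ^ ((1 : ℝ)/4)

noncomputable def b : ℕ → ℝ
  | 0 => 1
  | 1 => 1
  | (k+2) => (((k+1).factorial : ℝ) * rho) ^ ((1 : ℝ)/(k+1))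

noncomputable def lam (k : ℕ) : ℝ := Real.log (b (k+1) / b k)

noncomputable def alpha : ℕ → ℝ
  | 0 => 1
  | 1 => Real.sqrt (2 / rho ^ 5)
  | 2 => 2 / rho ^ 3
  | 3 => 6 / (rho ^ 4 * b 3 * b 5)
  | (k+4) => alpha (k+3) / (1 + ((k : ℝ) + 4) * (lam (k+3) - lam (k+4)))

lemma one_lt_rho : 1 < rho :=
  (Real.one_lt_rpow_iff_of_pos (by norm_num)).mpr (Or.inl ⟨by norm_num, by norm_num⟩)

lemma rho_pos : 0 < rho := lt_trans one_pos one_lt_rho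

lemma log_rho_pos : 0 < Real.log rho := Real.log_pos one_lt_rho

lemma rho_le : rho ≤ 4/3 := by
  have h := Real.rpow_le_rpow_of_exponent_le (by norm_num : (1:ℝ) ≤ 4/3)
    (by norm_num : (1:ℝ)/4 ≤ 1)
  rwa [Real.rpow_one] at h

lemma log_rho_le : Real.log rho ≤ 1/3 := by
  have h1 := Real.log_le_sub_one_of_pos rho_pos
  have h2 := rho_le
  linarith

lemma b_pos (k : ℕ) : 0 < b k := by
  match k with
  | 0 => norm_num [b]
  | 1 => norm_num [b]
  | (k+2) =>
    show 0 < (((k+1).factorial : ℝ) * rho) ^ ((1 : ℝ)/(k+1))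
    apply Real.rpow_pos_of_pos
    exact mul_pos (by exact_mod_cast (k+1).factorial_pos) rho_pos

lemma log_b (k : ℕ) : Real.log (b (k+2))
    = (Real.log ((k+1).factorial : ℝ) + Real.log rho) / ((k:ℝ)+1) := by
  show Real.log ((((k+1).factorial : ℝ) * rho) ^ ((1 : ℝ)/((k:ℕ)+1))) = _
  rw [Real.log_rpow (mul_pos (by exact_mod_cast (k+1).factorial_pos) rho_pos),
    Real.log_mul (by exact_mod_cast (k+1).factorial_pos.ne') rho_pos.ne']
  push_cast
  ring

lemma two_log_le (y : ℝ) (hy : 1 ≤ y) : 2 * Real.log y ≤ y - 1/y := by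
  have hy0 : 0 < y := lt_of_lt_of_le one_pos hy
  have hu : 0 ≤ Real.log y := Real.log_nonneg hy
  have hs : Real.log y ≤ Real.sinh (Real.log y) := by
    rcases hu.eq_or_lt with h | h
    · rw [← h]; simp
    · exact (Real.self_lt_sinh_iff.mpr h).le
  rw [Real.sinh_eq, Real.exp_log hy0, Real.exp_neg, Real.exp_log hy0] at hs
  rw [inv_eq_one_div] at hs
  linarith

lemma two_log_diff_le' (x : ℝ) (hx : 0 < x) :
    2 * (Real.log (x+1) - Real.log x) * (x*(x+1)) ≤ 2*x + 1 := by
  have hx1 : 0 < x + 1 := by linarith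
  have h := two_log_le ((x+1)/x) (by rw [le_div_iff₀ hx]; linarith)
  rw [Real.log_div (by positivity) hx.ne'] at h
  have e1 : 1/((x+1)/x) = x/(x+1) := by field_simp
  rw [e1] at h
  have e2 : (x+1)/x - x/(x+1) = (2*x+1)/(x*(x+1)) := by field_simp; ring
  rw [e2] at h
  calc 2 * (Real.log (x+1) - Real.log x) * (x*(x+1))
      ≤ ((2*x+1)/(x*(x+1))) * (x*(x+1)) := by
        apply mul_le_mul_of_nonneg_right h (by positivity)
    _ = 2*x+1 := by field_simp

lemma le_log_diff (x : ℝ) (hx : 0 < x) :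
    1 ≤ (Real.log (x+1) - Real.log x) * (x+1) := by
  have hx1 : 0 < x + 1 := by linarith
  have h := Real.log_le_sub_one_of_pos (show 0 < x/(x+1) by positivity)
  rw [Real.log_div hx.ne' hx1.ne'] at h
  have e : x/(x+1) - 1 = -(1/(x+1)) := by field_simp; ring
  rw [e] at h
  have h2 : 1/(x+1) ≤ Real.log (x+1) - Real.log x := by linarith
  calc (1:ℝ) = (1/(x+1))*(x+1) := by field_simp
    _ ≤ (Real.log (x+1) - Real.log x) * (x+1) := by
        apply mul_le_mul_of_nonneg_right h2 (by positivity)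

lemma log_diff_le (x : ℝ) (hx : 0 < x) :
    (Real.log (x+1) - Real.log x) * x ≤ 1 := by
  have hx1 : 0 < x + 1 := by linarith
  have h := Real.log_le_sub_one_of_pos (show 0 < (x+1)/x by positivity)
  rw [Real.log_div hx1.ne' hx.ne'] at h
  have e : (x+1)/x - 1 = 1/x := by field_simp; ring
  rw [e] at h
  calc (Real.log (x+1) - Real.log x) * x ≤ (1/x)*x := by
        apply mul_le_mul_of_nonneg_right h hx.le
    _ = 1 := by field_simp

lemma log_fac_succ (j : ℕ) : Real.log ((j+1).factorial : ℝ)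
    = Real.log ((j).factorial : ℝ) + Real.log ((j:ℝ)+1) := by
  rw [Nat.factorial_succ]
  push_cast
  rw [Real.log_mul (by positivity) (by exact_mod_cast j.factorial_pos.ne')]
  ring

lemma T_pos (m : ℕ) :
    ((m:ℝ)+2) * (2*Real.log ((m:ℝ)+3) - 2) + ((m:ℝ)+2)/((m:ℝ)+4)
      < 2*Real.log ((m+2).factorial : ℝ) + 2*Real.log rho := by
  induction m with
  | zero =>
    norm_num [Nat.factorial]
    have h3 : (4:ℝ) * Real.log 3 < 7 * Real.log 2 := by
      have h81 : Real.log 81 < Real.log 128 := Real.log_lt_log (by norm_num) (by norm_num)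
      rw [show (81:ℝ) = 3^(4:ℕ) by norm_num, show (128:ℝ) = 2^(7:ℕ) by norm_num,
        Real.log_pow, Real.log_pow] at h81
      push_cast at h81; linarith
    have h2 : Real.log 2 < 0.6931471808 := Real.log_two_lt_d9
    have hc : 0 < Real.log rho := log_rho_pos
    linarith
  | succ m ih =>
    rw [show m+1+2 = m+3 from rfl]
    push_cast
    rw [show ((m:ℝ))+1+3 = (m:ℝ)+4 from by ring, show ((m:ℝ))+1+2 = (m:ℝ)+3 from by ring,
      show ((m:ℝ))+1+4 = (m:ℝ)+5 from by ring]
    have hfac : Real.log ((m+3).factorial : ℝ)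
        = Real.log ((m+2).factorial : ℝ) + Real.log ((m:ℝ)+3) := by
      have h := log_fac_succ (m+2)
      rw [show m+2+1 = m+3 from rfl] at h
      rw [h]; push_cast; ring_nf
    have key : 2 * (Real.log ((m:ℝ)+4) - Real.log ((m:ℝ)+3)) * (((m:ℝ)+3)*((m:ℝ)+4))
        ≤ 2*((m:ℝ)+3) + 1 := by
      have h := two_log_diff_le' ((m:ℝ)+3) (by positivity)
      rw [show ((m:ℝ))+3+1 = (m:ℝ)+4 from by ring] at h
      linarith
    have hkey' : 2*((m:ℝ)+3)*(Real.log ((m:ℝ)+4) - Real.log ((m:ℝ)+3))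
        ≤ 2 - 1/((m:ℝ)+4) := by
      have h2 : 2*((m:ℝ)+3)*(Real.log ((m:ℝ)+4) - Real.log ((m:ℝ)+3))
          ≤ (2*((m:ℝ)+3)+1)/((m:ℝ)+4) :=
        (le_div_iff₀ (by positivity)).mpr (by linarith)
      have e : (2*((m:ℝ)+3)+1)/((m:ℝ)+4) = 2 - 1/((m:ℝ)+4) := by
        rw [eq_sub_iff_add_eq]; field_simp; ring
      linarith [e ▸ h2]
    have hq : ((m:ℝ)+3)/((m:ℝ)+5) ≤ ((m:ℝ)+3)/((m:ℝ)+4) :=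
      div_le_div_of_nonneg_left (by positivity) (by positivity) (by linarith)
    have hsplit : ((m:ℝ)+3)/((m:ℝ)+4) = ((m:ℝ)+2)/((m:ℝ)+4) + 1/((m:ℝ)+4) := by ring
    rw [hfac]
    linarith

lemma delta_eq (m : ℕ) :
    lam (m+3) - lam (m+4)
      = 2*(Real.log ((m+2).factorial : ℝ) + Real.log ((m:ℝ)+3) + Real.log rho)/((m:ℝ)+3)
        - (Real.log ((m+2).factorial : ℝ) + Real.log rho)/((m:ℝ)+2)
        - (Real.log ((m+2).factorial : ℝ) + Real.log ((m:ℝ)+3) + Real.log ((m:ℝ)+4)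
            + Real.log rho)/((m:ℝ)+4) := by
  have h3 := log_b (m+1)
  have h4 := log_b (m+2)
  have h5 := log_b (m+3)
  rw [show m+1+2 = m+3 from rfl, show m+1+1 = m+2 from rfl] at h3
  rw [show m+2+2 = m+4 from rfl, show m+2+1 = m+3 from rfl] at h4
  rw [show m+3+2 = m+5 from rfl, show m+3+1 = m+4 from rfl] at h5
  have hL3 : Real.log ((m+3).factorial : ℝ)
      = Real.log ((m+2).factorial : ℝ) + Real.log ((m:ℝ)+3) := by
    have h := log_fac_succ (m+2)
    rw [show m+2+1 = m+3 from rfl] at h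
    rw [h]; push_cast; ring_nf
  have hL4 : Real.log ((m+4).factorial : ℝ)
      = Real.log ((m+2).factorial : ℝ) + Real.log ((m:ℝ)+3) + Real.log ((m:ℝ)+4) := by
    have h := log_fac_succ (m+3)
    rw [show m+3+1 = m+4 from rfl] at h
    rw [h, hL3]; push_cast; ring_nf
  rw [hL3] at h4
  rw [hL4] at h5
  show Real.log (b (m+4) / b (m+3)) - Real.log (b (m+5) / b (m+4)) = _
  rw [Real.log_div (b_pos _).ne' (b_pos _).ne', Real.log_div (b_pos _).ne' (b_pos _).ne',
    h3, h4, h5]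
  push_cast
  have d1 : ((m:ℝ))+1+1 ≠ 0 := by positivity
  have d2 : ((m:ℝ))+2+1 ≠ 0 := by positivity
  have d3 : ((m:ℝ))+3+1 ≠ 0 := by positivity
  have d4 : ((m:ℝ))+2 ≠ 0 := by positivity
  have d5 : ((m:ℝ))+3 ≠ 0 := by positivity
  have d6 : ((m:ℝ))+4 ≠ 0 := by positivity
  field_simp
  ring

lemma F_le (m : ℕ) : Real.log ((m+2).factorial : ℝ) ≤ ((m:ℝ)+2) * Real.log ((m:ℝ)+3) := by
  have h1 : ((m+2).factorial : ℝ) ≤ ((m:ℝ)+3)^(m+2 : ℕ) := by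
    calc ((m+2).factorial : ℝ) ≤ ((m+2 : ℕ):ℝ)^(m+2 : ℕ) := by
          exact_mod_cast Nat.factorial_le_pow (m+2)
      _ ≤ ((m:ℝ)+3)^(m+2 : ℕ) := by
          apply pow_le_pow_left₀ (by positivity)
          push_cast; linarith
  have h2 : Real.log ((m+2).factorial : ℝ) ≤ Real.log (((m:ℝ)+3)^(m+2 : ℕ)) := by
    apply Real.log_le_log (by exact_mod_cast (m+2).factorial_pos) h1
  rw [Real.log_pow] at h2
  push_cast at h2
  linarith

lemma D_bounds (m : ℕ) :
    0 < 1 + ((m:ℝ)+4)*(lam (m+3) - lam (m+4)) ∧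
    ((m:ℝ)+3) * (1 + ((m:ℝ)+4)*(lam (m+3) - lam (m+4))) < (m:ℝ)+4 := by
  have hδe := delta_eq m
  set d := lam (m+3) - lam (m+4) with hd
  set F := Real.log ((m+2).factorial : ℝ) with hF
  set c := Real.log rho with hc
  set x := (m:ℝ) with hxd
  set Ln := Real.log (x+3) with hLn
  set Ln1 := Real.log (x+4) with hLn1
  have hx0 : 0 ≤ x := Nat.cast_nonneg m
  have hδ : d * ((x+2)*(x+3)*(x+4)) = (x+2)*(x+5)*Ln - (x+2)*(x+3)*Ln1 - 2*F - 2*c := by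
    rw [hδe]
    have d4 : x+2 ≠ 0 := by positivity
    have d5 : x+3 ≠ 0 := by positivity
    have d6 : x+4 ≠ 0 := by positivity
    field_simp
    ring
  have hc0 : 0 < c := log_rho_pos
  have hc1 : c ≤ 1/3 := log_rho_le
  have hFle : F ≤ (x+2) * Ln := F_le m
  have hT : (x+2) * (2*Ln - 2) + (x+2)/(x+4) < 2*F + 2*c := T_pos m
  have hT' : ((x+2) * (2*Ln - 2)) * (x+4) + (x+2) < (2*F + 2*c)*(x+4) := by
    have h := mul_lt_mul_of_pos_right hT (show (0:ℝ) < x+4 by positivity)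
    have e : ((x+2)/(x+4))*(x+4) = x+2 := by field_simp
    nlinarith [h, e]
  have h4' : 1 ≤ (Ln1 - Ln) * (x+4) := by
    have h := le_log_diff (x+3) (by positivity)
    rw [show x+3+1 = x+4 from by ring] at h
    linarith
  have h5' : (Ln1 - Ln) * (x+3) ≤ 1 := by
    have h := log_diff_le (x+3) (by positivity)
    rw [show x+3+1 = x+4 from by ring] at h
    linarith
  constructor
  · -- lower bound
    have hLd : -((x+2)*(x+3)) < d * ((x+2)*(x+3)*(x+4)) := by
      rw [hδ]
      nlinarith [mul_le_mul_of_nonneg_left h5' (show (0:ℝ) ≤ x+2 by linarith)]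
    have h1 : (0:ℝ) * ((x+2)*(x+3)) < (1 + (x+4)*d) * ((x+2)*(x+3)) := by
      linarith [hLd]
    exact lt_of_mul_lt_mul_right h1 (by positivity)
  · -- upper bound
    have hU4 : (d * ((x+2)*(x+3)*(x+4))) * (x+4) < (x+2)*(x+4) := by
      rw [hδ]
      nlinarith [hT', mul_le_mul_of_nonneg_left h4' (show (0:ℝ) ≤ (x+2)*(x+3) by positivity)]
    have hU : d * ((x+2)*(x+3)*(x+4)) < x+2 :=
      lt_of_mul_lt_mul_right hU4 (by positivity)
    have h1 : ((x+3) * (1 + (x+4)*d)) * (x+2) < ((x+4)) * (x+2) := by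
      linarith [hU]
    exact lt_of_mul_lt_mul_right h1 (by positivity)

lemma alpha_pos3 : ∀ m : ℕ, 0 < alpha (m+3) := by
  intro m
  induction m with
  | zero =>
    show 0 < 6 / (rho ^ 4 * b 3 * b 5)
    apply div_pos (by norm_num)
    exact mul_pos (mul_pos (pow_pos rho_pos 4) (b_pos 3)) (b_pos 5)
  | succ m ih =>
    show 0 < alpha (m+4)
    have ha : alpha (m+4) = alpha (m+3) / (1 + ((m : ℝ) + 4) * (lam (m+3) - lam (m+4))) := rfl
    rw [ha]
    exact div_pos ih (D_bounds m).1

theorem k_alpha_strict_mono (k : ℕ) (hk : 2 ≤ k) :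
    (k : ℝ) * alpha k < ((k : ℝ) + 1) * alpha (k+1) := by
  match k, hk with
  | 2, _ =>
    show (2:ℝ) * (2 / rho ^ 3) < ((2:ℝ)+1) * (6 / (rho ^ 4 * b 3 * b 5))
    have eb3 : b 3 = (((2:ℕ).factorial : ℝ) * rho) ^ ((1 : ℝ)/2) := by norm_num [b]
    have eb5 : b 5 = (((4:ℕ).factorial : ℝ) * rho) ^ ((1 : ℝ)/4) := by norm_num [b]
    have hb3 : (b 3)^2 = 2*rho := by
      rw [eb3, ← Real.rpow_natCast (_ ^ ((1:ℝ)/2)) 2,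
        ← Real.rpow_mul (mul_nonneg (by positivity) rho_pos.le)]
      norm_num [Nat.factorial]
    have hb5 : (b 5)^4 = 24*rho := by
      rw [eb5, ← Real.rpow_natCast (_ ^ ((1:ℝ)/4)) 4,
        ← Real.rpow_mul (mul_nonneg (by positivity) rho_pos.le)]
      norm_num [Nat.factorial]
    have hrho4 : rho^4 = 4/3 := by
      show ((4/3 : ℝ) ^ ((1 : ℝ)/4))^(4:ℕ) = 4/3
      rw [← Real.rpow_natCast (_ ^ ((1:ℝ)/4)) 4, ← Real.rpow_mul (by norm_num)]
      norm_num
    have h9 : 2*rho*(b 3)*(b 5) < 9 := by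
      apply lt_of_pow_lt_pow_left₀ 4 (by norm_num)
      have e : (2*rho*(b 3)*(b 5))^4 = 2^4 * (rho^4) * ((b 3)^2)^2 * ((b 5)^4) := by ring
      rw [e, hb3, hb5, hrho4]
      have h1 : rho ≤ 4/3 := rho_le
      have h0 : 0 < rho := rho_pos
      nlinarith [h0, h1]
    have e1 : (2:ℝ) * (2/rho^3) = 4/rho^3 := by ring
    have e2 : ((2:ℝ)+1) * (6/(rho^4*b 3*b 5)) = 18/(rho^4*b 3*b 5) := by ring
    rw [e1, e2, div_lt_div_iff₀ (pow_pos rho_pos 3)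
      (mul_pos (mul_pos (pow_pos rho_pos 4) (b_pos 3)) (b_pos 5))]
    nlinarith [h9, pow_pos rho_pos 3, mul_pos (mul_pos rho_pos (b_pos 3)) (b_pos 5)]
  | (m+3), _ =>
    have ha : alpha (m+3+1)
        = alpha (m+3) / (1 + ((m : ℝ) + 4) * (lam (m+3) - lam (m+4))) := rfl
    obtain ⟨hD0, hD1⟩ := D_bounds m
    have hA := alpha_pos3 m
    rw [ha, ← mul_div_assoc, lt_div_iff₀ hD0]
    push_cast
    nlinarith [mul_lt_mul_of_pos_right hD1 hA, hA, hD0]
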